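/- For every natural number n, every positive integer N, and every t ∈ [0, 1/(N·2ⁿ + 2)], one has g₂^[N](g₁^[n](t)) = 2ⁿ·t / (((2 − N)·2ⁿ − 2)·t + 1). -/

import Mathlib

/-- The element `g₁` of the Lodha–Moore group as a piecewise fractional linear map. -/
noncomputable def g₁ (t : ℝ) : ℝ :=
  if t ≤ 0 then t
  else if t ≤ 1 / 2 then 2 * t / (2 * t + 1)
  else if t ≤ 1 then 1 / (3 - 2 * t)
  else t

/-- The element `g₂` of the Lodha–Moore group as a piecewise fractional linear map. -/
noncomputable def g₂ (t : ℝ) : ℝ :=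
  if t ≤ 0 then t
  else if t ≤ 1 / 3 then t / (1 - t)
  else if t ≤ 1 / 2 then (4 * t - 1) / (5 * t - 1)
  else if t ≤ 1 then 1 / (2 - t)
  else t

lemma aux_div (a e d : ℝ) (hd : d ≠ 0) : (a/d)/(e/d) = a/e := by
  rcases eq_or_ne e 0 with h | h
  · simp [h]
  · field_simp

lemma g₁_val (s : ℝ) (h0 : 0 ≤ s) (h1 : s ≤ 1/2) : g₁ s = 2*s/(2*s+1) := by
  unfold g₁
  rcases eq_or_lt_of_le h0 with h | h
  · rw [← h]; norm_num
  · rw [if_neg (not_le.mpr h), if_pos (by linarith : s ≤ 1/2)]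

lemma g₂_val (s : ℝ) (h0 : 0 ≤ s) (h1 : s ≤ 1/3) : g₂ s = s/(1-s) := by
  unfold g₂
  rcases eq_or_lt_of_le h0 with h | h
  · rw [← h]; norm_num
  · rw [if_neg (not_le.mpr h), if_pos (by linarith : s ≤ 1/3)]

lemma g₁_iter (n : ℕ) (t : ℝ) (h0 : 0 ≤ t) (h1 : t ≤ 1/2) :
    g₁^[n] t = 2^n * t / (2*(2^n - 1)*t + 1) := by
  induction n with
  | zero => simp
  | succ n ih =>
    have h2n : (1:ℝ) ≤ 2^n := one_le_pow₀ (by norm_num)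
    have hd : (0:ℝ) < 2*((2:ℝ)^n - 1)*t + 1 := by nlinarith
    rw [Function.iterate_succ_apply', ih]
    set s := 2^n * t / (2*((2:ℝ)^n - 1)*t + 1) with hs
    have hs0 : 0 ≤ s := div_nonneg (by positivity) hd.le
    have hs2 : s ≤ 1/2 := by
      rw [hs, div_le_iff₀ hd]; nlinarith
    rw [g₁_val s hs0 hs2, hs]
    have hd' : (0:ℝ) < 2*((2:ℝ)^(n+1) - 1)*t + 1 := by
      have : (1:ℝ) ≤ 2^(n+1) := one_le_pow₀ (by norm_num)
      nlinarith
    have hd2 : (0:ℝ) < 2 * (2^n * t / (2*((2:ℝ)^n - 1)*t + 1)) + 1 := by positivity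
    rw [div_eq_div_iff hd2.ne' hd'.ne']
    linear_combination 2 * div_mul_cancel₀ (2^n * t) hd.ne'

lemma g₂_iter (N : ℕ) (s : ℝ) (h0 : 0 ≤ s) (h1 : ((N:ℝ)+2)*s ≤ 1) :
    g₂^[N] s = s/(1 - N*s) := by
  induction N with
  | zero => simp
  | succ N ih =>
    push_cast at h1 ⊢
    have hN2 : ((N:ℝ)+2)*s ≤ 1 := by nlinarith
    have hd : (0:ℝ) < 1 - N*s := by nlinarith
    rw [Function.iterate_succ_apply', ih hN2]
    set v := s/(1 - (N:ℝ)*s) with hv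
    have hv0 : 0 ≤ v := div_nonneg h0 hd.le
    have hv3 : v ≤ 1/3 := by rw [hv, div_le_iff₀ hd]; nlinarith
    rw [g₂_val v hv0 hv3]
    have h1v : 1 - v = (1 - ((N:ℝ)+1)*s)/(1 - N*s) := by
      rw [hv, eq_div_iff hd.ne', sub_mul, div_mul_cancel₀ _ hd.ne']; ring
    rw [h1v, hv, aux_div _ _ _ hd.ne']

/-- Formula for `g₂^[N] ∘ g₁^[n]` on `[0, 1/(N·2ⁿ + 2)]`. -/
theorem g₂_iter_g₁_iter_formula₁ (n : ℕ) (N : ℕ) (hN : 0 < N) (t : ℝ)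
    (ht : t ∈ Set.Icc (0 : ℝ) (1 / ((N : ℝ) * 2 ^ n + 2))) :
    g₂^[N] (g₁^[n] t) = 2 ^ n * t / (((2 - (N : ℝ)) * 2 ^ n - 2) * t + 1) := by
  obtain ⟨h0, h1⟩ := ht
  have hN1 : (1:ℝ) ≤ N := by exact_mod_cast hN
  have h2n : (1:ℝ) ≤ 2^n := one_le_pow₀ (by norm_num)
  have hD : (0:ℝ) < (N:ℝ)*2^n + 2 := by nlinarith
  have hkey : ((N:ℝ)*2^n + 2) * t ≤ 1 := by
    rw [le_div_iff₀ hD] at h1; linarith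
  have ht2 : t ≤ 1/2 := by nlinarith
  rw [g₁_iter n t h0 ht2]
  have hd : (0:ℝ) < 2*((2:ℝ)^n - 1)*t + 1 := by nlinarith
  set s := 2^n * t / (2*((2:ℝ)^n - 1)*t + 1) with hs
  have hs0 : 0 ≤ s := div_nonneg (by positivity) hd.le
  have hs1 : ((N:ℝ)+2)*s ≤ 1 := by
    have h2 : ((N:ℝ)+2)*s = ((N:ℝ)+2)*(2^n * t) / (2*((2:ℝ)^n - 1)*t + 1) := by
      rw [hs]; ring
    rw [h2, div_le_one hd]; nlinarith
  rw [g₂_iter N s hs0 hs1, hs]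
  have hB : (0:ℝ) < ((2 - (N:ℝ)) * 2 ^ n - 2) * t + 1 := by nlinarith
  have hdN : (0:ℝ) < 1 - (N:ℝ) * (2 ^ n * t / (2*((2:ℝ)^n - 1)*t + 1)) := by
    rw [sub_pos]
    calc (N:ℝ) * (2 ^ n * t / (2*((2:ℝ)^n - 1)*t + 1))
        = (N:ℝ) * (2 ^ n * t) / (2*((2:ℝ)^n - 1)*t + 1) := by ring
      _ < 1 := by rw [div_lt_one hd]; nlinarith
  have h1N : 1 - (N:ℝ) * (2 ^ n * t / (2*((2:ℝ)^n - 1)*t + 1))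
      = (((2 - (N:ℝ)) * 2 ^ n - 2) * t + 1)/(2*((2:ℝ)^n - 1)*t + 1) := by
    rw [eq_div_iff hd.ne', sub_mul, mul_div_assoc', div_mul_cancel₀ _ hd.ne']; ring
  rw [h1N, aux_div _ _ _ hd.ne']
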